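/- Let v₁, v₂ : ℝ → ℝ^d be differentiable at time t with ‖v₁(t)‖ = ‖v₂(t)‖ = 1, and suppose they satisfy the 2-agent PCA dynamics v̇ᵢ = (I − vᵢvᵢᵀ)Cvᵢ with C = (1/2)(v₁ − v₂)(v₁ − v₂)ᵀ. Then the inner product c(t) = ⟨v₁(t), v₂(t)⟩ satisfies ċ = −(1 + c)(1 − c)²; in particular ċ ≤ 0, with equality if and only if c = ±1. -/

import Mathlib

open Matrix Filter
open scoped InnerProductSpace

/-- Right-hand side of the Oja PCA flow `v̇ = (I - v vᵀ) M v` on `ℝ^d`. -/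
noncomputable def ojaRHS {d : ℕ} (M : Matrix (Fin d) (Fin d) ℝ)
    (x : EuclideanSpace ℝ (Fin d)) : EuclideanSpace ℝ (Fin d) :=
  WithLp.toLp 2 (((1 - Matrix.vecMulVec x x) * M) *ᵥ x)

lemma vecMulVec_mulVec' {d : ℕ} (w v x : Fin d → ℝ) :
    Matrix.vecMulVec w v *ᵥ x = (v ⬝ᵥ x) • w := by
  ext i
  simp [Matrix.mulVec, Matrix.vecMulVec_apply, dotProduct, Finset.mul_sum,
    mul_comm, mul_left_comm]

lemma inner_eq_dot {d : ℕ} (x y : EuclideanSpace ℝ (Fin d)) :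
    ⟪x, y⟫_ℝ = x ⬝ᵥ y := by
  simp [PiLp.inner_apply, dotProduct, mul_comm]

/-- For the 2-agent PCA dynamics with `C = (1/2)(v₁-v₂)(v₁-v₂)ᵀ`, the inner
product `c = ⟨v₁, v₂⟩` satisfies `ċ = -(1+c)(1-c)² ≤ 0`, with equality iff
`c = ±1`. -/
theorem stmt14 {d : ℕ} (v1 v2 : ℝ → EuclideanSpace ℝ (Fin d)) (t : ℝ)
    (hn1 : ‖v1 t‖ = 1) (hn2 : ‖v2 t‖ = 1)
    (C : Matrix (Fin d) (Fin d) ℝ)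
    (hC : C = (1 / 2 : ℝ) • Matrix.vecMulVec (v1 t - v2 t) (v1 t - v2 t))
    (hode1 : HasDerivAt v1 (ojaRHS C (v1 t)) t)
    (hode2 : HasDerivAt v2 (ojaRHS C (v2 t)) t) :
    HasDerivAt (fun s => ⟪v1 s, v2 s⟫_ℝ)
      (-(1 + ⟪v1 t, v2 t⟫_ℝ) * (1 - ⟪v1 t, v2 t⟫_ℝ) ^ 2) t ∧
    -(1 + ⟪v1 t, v2 t⟫_ℝ) * (1 - ⟪v1 t, v2 t⟫_ℝ) ^ 2 ≤ 0 ∧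
    (-(1 + ⟪v1 t, v2 t⟫_ℝ) * (1 - ⟪v1 t, v2 t⟫_ℝ) ^ 2 = 0 ↔
      ⟪v1 t, v2 t⟫_ℝ = 1 ∨ ⟪v1 t, v2 t⟫_ℝ = -1) := by
  set a := v1 t with ha
  set b := v2 t with hb
  set c : ℝ := ⟪a, b⟫_ℝ with hc
  set w : EuclideanSpace ℝ (Fin d) := a - b with hw
  have haa : (a : Fin d → ℝ) ⬝ᵥ a = 1 := by
    rw [← inner_eq_dot, real_inner_self_eq_norm_sq, hn1]; norm_num
  have hbb : (b : Fin d → ℝ) ⬝ᵥ b = 1 := by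
    rw [← inner_eq_dot, real_inner_self_eq_norm_sq, hn2]; norm_num
  have hab : (a : Fin d → ℝ) ⬝ᵥ b = c := (inner_eq_dot a b).symm
  have hba : (b : Fin d → ℝ) ⬝ᵥ a = c := by
    rw [← hab]; exact dotProduct_comm b a
  -- compute ojaRHS C x
  have key : ∀ x : EuclideanSpace ℝ (Fin d),
      ojaRHS C x = ((1/2) * (w ⬝ᵥ x)) • w
        - (((1/2) * (w ⬝ᵥ x)) * (x ⬝ᵥ w)) • x := by
    intro x
    have : ojaRHS C x = WithLp.toLp 2 ((1 - Matrix.vecMulVec x x) *ᵥ (C *ᵥ x)) := by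
      rw [ojaRHS, ← Matrix.mulVec_mulVec]
    rw [this, hC, Matrix.smul_mulVec, vecMulVec_mulVec', Matrix.sub_mulVec,
      Matrix.one_mulVec, smul_smul, vecMulVec_mulVec']
    simp only [← hw]
    ext i
    simp [PiLp.smul_apply, PiLp.sub_apply, smul_eq_mul]
  have hsubd : ∀ x y z : EuclideanSpace ℝ (Fin d),
      ((x - y : EuclideanSpace ℝ (Fin d)) : Fin d → ℝ) ⬝ᵥ z = x ⬝ᵥ z - y ⬝ᵥ z := by
    intro x y z
    simp [dotProduct, PiLp.sub_apply, sub_mul, Finset.sum_sub_distrib]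
  have hdsub : ∀ x y z : EuclideanSpace ℝ (Fin d),
      (x : Fin d → ℝ) ⬝ᵥ ((y - z : EuclideanSpace ℝ (Fin d)) : Fin d → ℝ) = x ⬝ᵥ y - x ⬝ᵥ z := by
    intro x y z
    simp [dotProduct, PiLp.sub_apply, mul_sub, Finset.sum_sub_distrib]
  have hsmuld : ∀ (r : ℝ) (x y : EuclideanSpace ℝ (Fin d)),
      ((r • x : EuclideanSpace ℝ (Fin d)) : Fin d → ℝ) ⬝ᵥ y = r * (x ⬝ᵥ y) := by
    intro r x y
    simp [dotProduct, PiLp.smul_apply, Finset.mul_sum, mul_assoc]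
  have hdsmul : ∀ (r : ℝ) (x y : EuclideanSpace ℝ (Fin d)),
      (x : Fin d → ℝ) ⬝ᵥ ((r • y : EuclideanSpace ℝ (Fin d)) : Fin d → ℝ) = r * (x ⬝ᵥ y) := by
    intro r x y
    simp [dotProduct, PiLp.smul_apply, Finset.mul_sum, mul_comm, mul_left_comm]
  have hwa : (w : Fin d → ℝ) ⬝ᵥ a = 1 - c := by
    rw [hw, hsubd, haa, hba]
  have hwb : (w : Fin d → ℝ) ⬝ᵥ b = c - 1 := by
    rw [hw, hsubd, hab, hbb]
  have haw : (a : Fin d → ℝ) ⬝ᵥ w = 1 - c := by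
    rw [dotProduct_comm]; exact hwa
  have hbw : (b : Fin d → ℝ) ⬝ᵥ w = c - 1 := by
    rw [dotProduct_comm]; exact hwb
  have hd := hode1.inner ℝ hode2
  have hval : ⟪a, ojaRHS C b⟫_ℝ + ⟪ojaRHS C a, b⟫_ℝ
      = -(1 + c) * (1 - c) ^ 2 := by
    rw [key a, key b, inner_eq_dot, inner_eq_dot]
    simp only [hw, hdsub, hsubd, hdsmul, hsmuld, haa, hbb, hab, hba]
    ring
  refine ⟨by rw [← hval]; exact hd, ?_, ?_⟩
  · have hcle : c ≤ 1 := by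
      have := real_inner_le_norm a b
      rwa [hn1, hn2, one_mul] at this
    have hcge : -1 ≤ c := by
      have := abs_real_inner_le_norm a b
      rw [hn1, hn2, one_mul] at this
      linarith [abs_le.mp this]
    nlinarith [sq_nonneg (1 - c)]
  · constructor
    · intro h
      rcases mul_eq_zero.mp h with h1 | h2
      · right; linarith [neg_eq_zero.mp h1]
      · left; have := pow_eq_zero_iff (n := 2) (by norm_num) |>.mp h2; linarith
    · rintro (h | h) <;> rw [h] <;> ring
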